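/- Let A be a nonzero polynomial in F_2[x]. Then there exists a positive integer m such that for all k ≥ m, A_{2k} = x^2 + x and A_{2k+1} = 1; consequently the Collatz sequences of A are of finite length ℓ_A = m + 1 (for the least such m), and ℓ_A ≤ 2^{deg(A) - 1}. -/
import Mathlib


open Polynomial Finset

/-- The polynomial `M = x^2 + x + 1` over `F_2`. -/
noncomputable def M : Polynomial (ZMod 2) := X ^ 2 + X + 1

/-- The odd part of a binary polynomial: `P` divided by `x^{val_x(P)} (x+1)^{val_{x+1}(P)}`. -/
noncomputable def oddPart (P : Polynomial (ZMod 2)) : Polynomial (ZMod 2) :=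
  P / (X ^ P.rootMultiplicity 0 * (X + 1) ^ P.rootMultiplicity 1)

/-- The Collatz sequence of a binary polynomial `A`:
`A_0 = A`, `A_{2k+1} = oddPart A_{2k}`, `A_{2k+2} = 1 + M * A_{2k+1}`. -/
noncomputable def collatz (A : Polynomial (ZMod 2)) : ℕ → Polynomial (ZMod 2)
  | 0 => A
  | n + 1 => if n % 2 = 0 then oddPart (collatz A n) else 1 + M * collatz A n

/-- `a_k`: the multiplicity of `x` in `A_k`. -/
noncomputable def aSeq (A : Polynomial (ZMod 2)) (k : ℕ) : ℕ :=
  (collatz A k).rootMultiplicity 0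

/-- `b_k`: the multiplicity of `x + 1` in `A_k`. -/
noncomputable def bSeq (A : Polynomial (ZMod 2)) (k : ℕ) : ℕ :=
  (collatz A k).rootMultiplicity 1

/-- The length `ℓ_A = m + 1`, where `m` is the least nonnegative integer
with `A_{2m+1} = 1`. -/
noncomputable def collatzLength (A : Polynomial (ZMod 2)) : ℕ :=
  sInf {m : ℕ | collatz A (2 * m + 1) = 1} + 1

namespace CZ

abbrev R := Polynomial (ZMod 2)


lemma zmod2 (c : ZMod 2) : c = 0 ∨ c = 1 := by
  fin_cases c
  · exact Or.inl rfl
  · exact Or.inr rfl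

lemma zmod2_ne (c : ZMod 2) (h : c ≠ 0) : c = 1 := (zmod2 c).resolve_left h

lemma two_zero : (1 : R) + 1 = 0 := by
  rw [← C_1, ← C_add]
  norm_num
  rfl

lemma X_sub_C0 : (X : R) - C 0 = X := by simp

lemma X_sub_C1 : (X : R) - C 1 = X + 1 := by
  have h : (-1 : ZMod 2) = 1 := rfl
  rw [sub_eq_add_neg, ← C_neg, h, C_1]

lemma X1_ne : (X + 1 : R) ≠ 0 := by
  intro h
  have h2 := congrArg (Polynomial.eval 0) h
  simp at h2

lemma natDegree_X1 : (X + 1 : R).natDegree = 1 := by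
  rw [← C_1]; exact natDegree_X_add_C 1

/-- An odd polynomial: nonvanishing at 0 and 1. -/
def OddP (B : R) : Prop := B.eval 0 = 1 ∧ B.eval 1 = 1

lemma OddP.ne_zero {B : R} (h : OddP B) : B ≠ 0 := by
  intro h0
  rw [h0] at h
  obtain ⟨h1, -⟩ := h
  simp at h1

lemma oddP_one : OddP (1 : R) := by constructor <;> simp


lemma rm0_pow (a : ℕ) : rootMultiplicity 0 ((X : R) ^ a) = a := by
  have := rootMultiplicity_X_sub_C_pow (R := ZMod 2) 0 a
  rwa [X_sub_C0] at this

lemma rm1_pow (b : ℕ) : rootMultiplicity 1 ((X + 1: R) ^ b) = b := by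
  have := rootMultiplicity_X_sub_C_pow (R := ZMod 2) 1 b
  rwa [X_sub_C1] at this

lemma rm_eq_zero_of_eval_one {c : ZMod 2} {Q : R} (h : Q.eval c = 1) :
    rootMultiplicity c Q = 0 := by
  apply rootMultiplicity_eq_zero
  rw [IsRoot, h]
  exact one_ne_zero

lemma eval0_Xpow (a : ℕ) : ((X + 1 : R) ^ a).eval 0 = 1 := by simp
lemma eval1_Xpow (a : ℕ) : ((X : R) ^ a).eval 1 = 1 := by simp

/-- Characterization of `oddPart` together with the root multiplicities. -/
lemma oddPart_eq {P Q : R} (a b : ℕ) (h : P = X ^ a * (X + 1) ^ b * Q)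
    (h0 : Q.eval 0 = 1) (h1 : Q.eval 1 = 1) :
    oddPart P = Q ∧ P.rootMultiplicity 0 = a ∧ P.rootMultiplicity 1 = b := by
  have hQ : OddP Q := ⟨h0, h1⟩
  have hQne : Q ≠ 0 := hQ.ne_zero
  have hD : (X : R) ^ a * (X + 1) ^ b ≠ 0 :=
    mul_ne_zero (pow_ne_zero _ X_ne_zero) (pow_ne_zero _ X1_ne)
  have hPne : P ≠ 0 := by rw [h]; exact mul_ne_zero hD hQne
  have hra : P.rootMultiplicity 0 = a := by
    rw [h, rootMultiplicity_mul (by rw [← h]; exact hPne),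
      rootMultiplicity_mul (mul_ne_zero (pow_ne_zero _ X_ne_zero) (pow_ne_zero _ X1_ne)),
      rm0_pow, rm_eq_zero_of_eval_one h0, rm_eq_zero_of_eval_one (eval0_Xpow b)]
    omega
  have hrb : P.rootMultiplicity 1 = b := by
    rw [h, rootMultiplicity_mul (by rw [← h]; exact hPne),
      rootMultiplicity_mul (mul_ne_zero (pow_ne_zero _ X_ne_zero) (pow_ne_zero _ X1_ne)),
      rm1_pow, rm_eq_zero_of_eval_one h1, rm_eq_zero_of_eval_one (eval1_Xpow a)]
    omega
  refine ⟨?_, hra, hrb⟩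
  rw [oddPart, hra, hrb, h, mul_div_cancel_left₀ Q hD]

/-- Decomposition of a nonzero polynomial into its even and odd parts. -/
lemma oddPart_spec {P : R} (hP : P ≠ 0) :
    P = X ^ P.rootMultiplicity 0 * (X + 1) ^ P.rootMultiplicity 1 * oddPart P ∧
      OddP (oddPart P) := by
  obtain ⟨Q1, hQ1, hnd1⟩ := exists_eq_pow_rootMultiplicity_mul_and_not_dvd P hP 0
  rw [X_sub_C0] at hQ1 hnd1
  have hQ1ne : Q1 ≠ 0 := by
    intro h; rw [h, mul_zero] at hQ1; exact hP hQ1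
  obtain ⟨Q, hQ, hnd2⟩ := exists_eq_pow_rootMultiplicity_mul_and_not_dvd Q1 hQ1ne 1
  rw [X_sub_C1] at hQ hnd2
  have hQ0 : Q.eval 0 = 1 := by
    apply zmod2_ne
    intro h0
    apply hnd1
    rw [hQ]
    have : (X : R) ∣ Q := by
      have := dvd_iff_isRoot (p := Q) (a := 0)
      rw [X_sub_C0] at this
      exact this.mpr h0
    exact Dvd.dvd.mul_left this _
  have hQ1e : Q.eval 1 = 1 := by
    apply zmod2_ne
    intro h1
    apply hnd2
    have := dvd_iff_isRoot (p := Q) (a := 1)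
    rw [X_sub_C1] at this
    exact this.mpr h1
  have hrm : Q1.rootMultiplicity 1 = P.rootMultiplicity 1 := by
    rw [hQ1, rootMultiplicity_mul (by rw [← hQ1]; exact hP),
      rm_eq_zero_of_eval_one (eval1_Xpow _), zero_add]
  have hdec : P = X ^ P.rootMultiplicity 0 * (X + 1) ^ P.rootMultiplicity 1 * Q := by
    conv_lhs => rw [hQ1, hQ]
    rw [hrm, mul_assoc]
  obtain ⟨h1, -, -⟩ := oddPart_eq _ _ hdec hQ0 hQ1e
  rw [h1]
  exact ⟨hdec, hQ0, hQ1e⟩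


lemma Mdef : M = (X : R) ^ 2 + X + 1 := rfl

lemma M_eval0 : M.eval 0 = 1 := by rw [Mdef]; simp
lemma M_eval1 : M.eval 1 = 1 := by
  rw [Mdef]; simp
  rfl

lemma M_natDegree : M.natDegree = 2 := by
  rw [Mdef]
  compute_degree!

lemma M_ne : M ≠ 0 := by
  intro h
  have := congrArg (Polynomial.eval 0) h
  rw [M_eval0] at this
  simp at this

lemma one_add_M : (1 : R) + M = X ^ 2 + X := by
  rw [Mdef]
  linear_combination two_zero

/-- The odd-step map. -/
noncomputable def T (B : R) : R := oddPart (1 + M * B)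

lemma step_ne {B : R} (hB : OddP B) : (1 : R) + M * B ≠ 0 := by
  intro h
  have hMB : M * B = 1 := by linear_combination h - two_zero
  have := congrArg natDegree hMB
  rw [natDegree_mul M_ne hB.ne_zero, M_natDegree, natDegree_one] at this
  omega

lemma step_natDegree {B : R} (hB : OddP B) :
    ((1 : R) + M * B).natDegree = B.natDegree + 2 := by
  have h1 : ((1 : R) + M * B).natDegree = (M * B).natDegree := by
    apply natDegree_add_eq_right_of_natDegree_lt
    rw [natDegree_mul M_ne hB.ne_zero, M_natDegree, natDegree_one]
    omega
  rw [h1, natDegree_mul M_ne hB.ne_zero, M_natDegree]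
  omega

lemma step_eval0 {B : R} (hB : OddP B) : ((1 : R) + M * B).eval 0 = 0 := by
  simp [M_eval0, hB.1]
  decide
lemma step_eval1 {B : R} (hB : OddP B) : ((1 : R) + M * B).eval 1 = 0 := by
  simp [M_eval1, hB.2]
  decide

lemma T_spec {B : R} (hB : OddP B) :
    OddP (T B) ∧ ∃ a b : ℕ, 1 ≤ a ∧ 1 ≤ b ∧
      (1 : R) + M * B = X ^ a * (X + 1) ^ b * T B ∧
      a + b + (T B).natDegree = B.natDegree + 2 := by
  unfold T
  have hne := step_ne hB
  obtain ⟨hdec, hodd⟩ := oddPart_spec hne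
  set a := ((1 : R) + M * B).rootMultiplicity 0 with ha
  set b := ((1 : R) + M * B).rootMultiplicity 1 with hb
  have ha1 : 1 ≤ a := (rootMultiplicity_pos hne).mpr (step_eval0 hB)
  have hb1 : 1 ≤ b := (rootMultiplicity_pos hne).mpr (step_eval1 hB)
  refine ⟨hodd, a, b, ha1, hb1, hdec, ?_⟩
  have := congrArg natDegree hdec
  rw [step_natDegree hB, natDegree_mul (mul_ne_zero (pow_ne_zero _ X_ne_zero)
    (pow_ne_zero _ X1_ne)) hodd.ne_zero, natDegree_mul (pow_ne_zero _ X_ne_zero)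
    (pow_ne_zero _ X1_ne), natDegree_pow, natDegree_pow, natDegree_X, natDegree_X1] at this
  omega

lemma T_odd {B : R} (hB : OddP B) : OddP (T B) := (T_spec hB).1

lemma T_natDegree_le {B : R} (hB : OddP B) : (T B).natDegree ≤ B.natDegree := by
  obtain ⟨-, a, b, ha, hb, -, hdeg⟩ := T_spec hB
  omega

lemma T_step_of_deg_eq {B : R} (hB : OddP B) (h : (T B).natDegree = B.natDegree) :
    (1 : R) + M * B = (X ^ 2 + X) * T B := by
  obtain ⟨-, a, b, ha, hb, hdec, hdeg⟩ := T_spec hB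
  have ha' : a = 1 := by omega
  have hb' : b = 1 := by omega
  rw [hdec, ha', hb']
  ring


lemma iter_odd {B : R} (hB : OddP B) (k : ℕ) : OddP (T^[k] B) := by
  induction k with
  | zero => exact hB
  | succ n ih => rw [Function.iterate_succ_apply']; exact T_odd ih

lemma iter_deg_antitone {B : R} (hB : OddP B) {i j : ℕ} (hij : i ≤ j) :
    (T^[j] B).natDegree ≤ (T^[i] B).natDegree := by
  induction j with
  | zero =>
    have : i = 0 := by omega
    subst this
    exact le_refl _
  | succ n ih =>
    rcases Nat.lt_or_ge i (n + 1) with h | h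
    · have h1 := ih (by omega)
      have h2 : (T^[n + 1] B).natDegree ≤ (T^[n] B).natDegree := by
        rw [Function.iterate_succ_apply']
        exact T_natDegree_le (iter_odd hB n)
      omega
    · have : i = n + 1 := by omega
      rw [this]

/-- Any cycle of `T` through odd polynomials consists only of `1`. -/
lemma cycle_eq_one {B : R} (hB : OddP B) {p : ℕ} (hp : 0 < p) (hcyc : T^[p] B = B) :
    B = 1 := by
  -- all degrees along the cycle are equal
  have hdeg : ∀ k ≤ p, (T^[k] B).natDegree = B.natDegree := by
    intro k hk
    have h1 := iter_deg_antitone hB (Nat.zero_le k)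
    have h2 := iter_deg_antitone hB hk
    rw [hcyc] at h2
    simp only [Function.iterate_zero_apply] at h1
    omega
  -- step relation
  have hstep : ∀ k < p, (1 : R) + M * T^[k] B = (X ^ 2 + X) * T^[k + 1] B := by
    intro k hk
    have hd : (T (T^[k] B)).natDegree = (T^[k] B).natDegree := by
      have e : T (T^[k] B) = T^[k + 1] B := (Function.iterate_succ_apply' T k B).symm
      rw [e, hdeg (k + 1) (by omega), hdeg k (by omega)]
    have h := T_step_of_deg_eq (iter_odd hB k) hd
    rw [Function.iterate_succ_apply']
    exact h
  -- telescoping invariant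
  have key : ∀ k ≤ p, M ^ k * (B + 1) = (X ^ 2 + X) ^ k * (T^[k] B + 1) := by
    intro k hk
    induction k with
    | zero => simp
    | succ n ih =>
      have ihn := ih (by omega)
      have hs := hstep n (by omega)
      rw [Mdef] at ihn ⊢
      rw [Mdef] at hs
      linear_combination ((X : R) ^ 2 + X + 1) * ihn + (X ^ 2 + X) ^ n * hs
  have hfin := key p (le_refl p)
  rw [hcyc] at hfin
  by_contra hB1
  have hB1' : B + 1 ≠ 0 := by
    intro h
    apply hB1
    linear_combination h - two_zero
  have hpow : (M : R) ^ p = (X ^ 2 + X) ^ p := mul_right_cancel₀ hB1' hfin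
  have := congrArg (Polynomial.eval 0) hpow
  simp [M_eval0, hp.ne', zero_pow] at this


lemma eval_one_coeff {B : R} {d : ℕ} (hd : B.natDegree ≤ d) :
    B.eval 1 = ∑ i ∈ Finset.range (d + 1), B.coeff i := by
  rw [eval_eq_sum_range' (Nat.lt_succ_of_le hd)]
  simp

/-- An odd polynomial of degree at most `d` is determined by its coefficients in
degrees `1, …, d-1`. -/
lemma odd_ext {B C : R} {d : ℕ} (hB : OddP B) (hC : OddP C)
    (hBd : B.natDegree ≤ d) (hCd : C.natDegree ≤ d)
    (h : ∀ i : Fin (d - 1), B.coeff (i.1 + 1) = C.coeff (i.1 + 1)) : B = C := by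
  have hmid : ∀ i, 1 ≤ i → i ≤ d - 1 → B.coeff i = C.coeff i := by
    intro i h1 h2
    have := h ⟨i - 1, by omega⟩
    simpa [Nat.sub_add_cancel h1] using this
  have h0 : B.coeff 0 = C.coeff 0 := by
    rw [coeff_zero_eq_eval_zero, coeff_zero_eq_eval_zero, hB.1, hC.1]
  have hhigh : ∀ i, d < i → B.coeff i = C.coeff i := by
    intro i hi
    rw [coeff_eq_zero_of_natDegree_lt (by omega), coeff_eq_zero_of_natDegree_lt (by omega)]
  have hlow : ∀ i ∈ Finset.range d, B.coeff i = C.coeff i := by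
    intro i hi
    simp only [Finset.mem_range] at hi
    rcases Nat.eq_zero_or_pos i with h' | h'
    · rw [h']; exact h0
    · exact hmid i h' (by omega)
  have htop : B.coeff d = C.coeff d := by
    rcases Nat.eq_zero_or_pos d with h' | h'
    · rw [h']; exact h0
    · have hsB : (1 : ZMod 2) = ∑ i ∈ Finset.range (d + 1), B.coeff i := by
        rw [← hB.2]; exact eval_one_coeff hBd
      have hsC : (1 : ZMod 2) = ∑ i ∈ Finset.range (d + 1), C.coeff i := by
        rw [← hC.2]; exact eval_one_coeff hCd
      rw [Finset.sum_range_succ] at hsB hsC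
      rw [Finset.sum_congr rfl hlow] at hsB
      have := hsB.symm.trans hsC
      exact add_left_cancel this
  ext i
  rcases Nat.lt_or_ge i d with h' | h'
  · exact hlow i (Finset.mem_range.mpr h')
  rcases Nat.eq_or_lt_of_le h' with h'' | h''
  · rw [← h'']; exact htop
  · exact hhigh i h''

/-- The encoding of an odd polynomial by its middle coefficients. -/
def enc (d : ℕ) (B : R) : Fin (d - 1) → ZMod 2 := fun i => B.coeff (i.1 + 1)

lemma enc_ne_zero {B : R} {d : ℕ} (hB : OddP B) (hBd : B.natDegree ≤ d) (hB1 : B ≠ 1) :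
    enc d B ≠ 0 := by
  intro h
  apply hB1
  apply odd_ext hB oddP_one hBd (by simp)
  intro i
  have := congrFun h i
  simp only [enc, Pi.zero_apply] at this
  rw [this]
  rw [Polynomial.coeff_one]
  simp


lemma collatz_succ (A : R) (n : ℕ) :
    collatz A (n + 1) = if n % 2 = 0 then oddPart (collatz A n) else 1 + M * collatz A n := rfl

lemma collatz_odd (A : R) (k : ℕ) :
    collatz A (2 * k + 1) = oddPart (collatz A (2 * k)) := by
  rw [collatz_succ]
  have h2 : (2 * k) % 2 = 0 := by omega
  rw [h2]
  simp

lemma collatz_even (A : R) (k : ℕ) :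
    collatz A (2 * k + 2) = 1 + M * collatz A (2 * k + 1) := by
  have h : 2 * k + 2 = (2 * k + 1) + 1 := rfl
  rw [h, collatz_succ]
  have h2 : (2 * k + 1) % 2 = 1 := by omega
  rw [h2]
  simp

lemma collatz_odd_iter (A : R) (k : ℕ) :
    collatz A (2 * k + 1) = T^[k] (oddPart A) := by
  induction k with
  | zero =>
    have h : 2 * 0 + 1 = 0 + 1 := rfl
    rw [h, collatz_succ]
    simp [collatz]
  | succ n ih =>
    have h : 2 * (n + 1) + 1 = 2 * n + 2 + 1 := by ring
    have h2 : 2 * n + 2 + 1 = 2 * (n + 1) + 1 := by ring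
    have h3 : 2 * n + 2 = 2 * (n + 1) := by ring
    calc collatz A (2 * (n + 1) + 1) = oddPart (collatz A (2 * (n + 1))) := collatz_odd A (n + 1)
      _ = oddPart (1 + M * collatz A (2 * n + 1)) := by rw [← h3, collatz_even]
      _ = T (T^[n] (oddPart A)) := by rw [ih]; rfl
      _ = T^[n + 1] (oddPart A) := (Function.iterate_succ_apply' T n (oddPart A)).symm

lemma T_one : T (1 : R) = 1 := by
  have h1 : (1 : R) + M * 1 = X ^ 2 + X := by rw [mul_one]; exact one_add_M
  have h2 : (X : R) ^ 2 + X = X ^ 1 * (X + 1) ^ 1 * 1 := by ring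
  unfold T
  rw [h1]
  exact (oddPart_eq 1 1 h2 (by simp) (by simp)).1

lemma oddPart_natDegree_le {A : R} (hA : A ≠ 0) : (oddPart A).natDegree ≤ A.natDegree := by
  obtain ⟨hdec, -⟩ := oddPart_spec hA
  refine natDegree_le_of_dvd ⟨X ^ A.rootMultiplicity 0 * (X + 1) ^ A.rootMultiplicity 1, ?_⟩ hA
  conv_lhs => rw [hdec]
  ring

lemma card_aux (d : ℕ) : Fintype.card {v : Fin (d - 1) → ZMod 2 // v ≠ 0} = 2 ^ (d - 1) - 1 := by
  have h1 : Fintype.card {v : Fin (d - 1) → ZMod 2 // v ≠ 0}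
      = Fintype.card (Fin (d - 1) → ZMod 2) - Fintype.card {v : Fin (d - 1) → ZMod 2 // v = 0} :=
    Fintype.card_subtype_compl _
  rw [h1, Fintype.card_subtype_eq (0 : Fin (d - 1) → ZMod 2), Fintype.card_fun]
  simp


lemma reach_one (A : R) (hA : A ≠ 0) :
    ∃ k ≤ 2 ^ (A.natDegree - 1) - 1, T^[k] (oddPart A) = 1 := by
  set d := A.natDegree with hd
  set B0 := oddPart A with hB0
  obtain ⟨-, hodd0⟩ := oddPart_spec hA
  have hdeg0 : B0.natDegree ≤ d := oddPart_natDegree_le hA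
  have hoddk : ∀ k, OddP (T^[k] B0) := iter_odd hodd0
  have hdegk : ∀ k, (T^[k] B0).natDegree ≤ d := fun k =>
    le_trans (by simpa using iter_deg_antitone hodd0 (Nat.zero_le k)) hdeg0
  set N := 2 ^ (d - 1) - 1 with hN
  by_contra hcon
  push_neg at hcon
  have hne1 : ∀ k ≤ N, T^[k] B0 ≠ 1 := fun k hk => hcon k hk
  have hcard : Fintype.card {v : Fin (d - 1) → ZMod 2 // v ≠ 0}
      < Fintype.card (Fin (N + 1)) := by
    rw [card_aux, Fintype.card_fin]
    omega
  set g : Fin (N + 1) → {v : Fin (d - 1) → ZMod 2 // v ≠ 0} := fun k =>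
    ⟨enc d (T^[k.1] B0),
      enc_ne_zero (hoddk k.1) (hdegk k.1) (hne1 k.1 (Nat.lt_succ_iff.mp k.2))⟩ with hg
  obtain ⟨i, j, hij, hgij⟩ := Fintype.exists_ne_map_eq_of_card_lt g hcard
  have heq : T^[i.1] B0 = T^[j.1] B0 := by
    apply odd_ext (hoddk i.1) (hoddk j.1) (hdegk i.1) (hdegk j.1)
    intro t
    have h := congrArg Subtype.val hgij
    exact congrFun h t
  have key : ∀ a b : ℕ, a < b → T^[a] B0 = T^[b] B0 → a ≤ N → False := by
    intro a b hab he haN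
    have hcyc : T^[b - a] (T^[a] B0) = T^[a] B0 := by
      rw [← Function.iterate_add_apply, Nat.sub_add_cancel (le_of_lt hab)]
      exact he.symm
    have := cycle_eq_one (hoddk a) (p := b - a) (by omega) hcyc
    exact hne1 a haN this
  rcases Nat.lt_trichotomy i.1 j.1 with h | h | h
  · exact key i.1 j.1 h heq (Nat.lt_succ_iff.mp i.2)
  · exact hij (Fin.ext h)
  · exact key j.1 i.1 h heq.symm (Nat.lt_succ_iff.mp j.2)



end CZ

theorem collatz_conjecture_binary (A : Polynomial (ZMod 2)) (hA : A ≠ 0) :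
    (∃ m : ℕ, 0 < m ∧ ∀ k ≥ m,
      collatz A (2 * k) = X ^ 2 + X ∧ collatz A (2 * k + 1) = 1) ∧
    collatzLength A ≤ 2 ^ (A.natDegree - 1) := by
  obtain ⟨k, hk, hk1⟩ := CZ.reach_one A hA
  have h1 : ∀ j, k ≤ j → CZ.T^[j] (oddPart A) = 1 := by
    intro j hj
    induction j, hj using Nat.le_induction with
    | base => exact hk1
    | succ n hn ih =>
      rw [Function.iterate_succ_apply', ih, CZ.T_one]
  constructor
  · refine ⟨k + 1, Nat.succ_pos k, ?_⟩
    intro j hj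
    obtain ⟨j', rfl⟩ : ∃ j', j = j' + 1 := ⟨j - 1, by omega⟩
    have hj' : k ≤ j' := by omega
    have hb : collatz A (2 * j' + 1) = 1 := by
      rw [CZ.collatz_odd_iter]; exact h1 j' hj'
    constructor
    · have he : 2 * (j' + 1) = 2 * j' + 2 := by ring
      rw [he, CZ.collatz_even, hb, mul_one, CZ.one_add_M]
    · rw [CZ.collatz_odd_iter]
      exact h1 (j' + 1) (by omega)
  · have hodd : collatz A (2 * k + 1) = 1 := by
      rw [CZ.collatz_odd_iter]; exact hk1
    have hle : sInf {m : ℕ | collatz A (2 * m + 1) = 1} ≤ k := Nat.sInf_le hodd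
    have h2 : 1 ≤ 2 ^ (A.natDegree - 1) := Nat.one_le_two_pow
    unfold collatzLength
    omega
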